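/- Changing thresholds in the distance formula sum (Corollary 'DF accounting'): Let 𝒳 be a hierarchically hyperbolic space. For any K₁ > 50E and K₂ ≥ K₁ + 100E there exist constants A ≥ 1 and B ≥ 0, depending only on K₂ and the HHS, such that for all x, y ∈ 𝒳, both sums below are finite and Σ_{U ∈ 𝔖} [d_U(x, y)]_{K₂} ≤ Σ_{U ∈ 𝔖} [d_U(x, y)]_{K₁} ≤ A·Σ_{U ∈ 𝔖} [d_U(x, y)]_{K₂} + B. -/

import Mathlib

/-- A geodesic from `x` to `y`, parameterized by arclength on `[0, dist x y]`. -/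
def IsGeodesicFrom {Y : Type*} [MetricSpace Y] (f : ℝ → Y) (x y : Y) : Prop :=
  f 0 = x ∧ f (dist x y) = y ∧
    ∀ s ∈ Set.Icc (0 : ℝ) (dist x y), ∀ t ∈ Set.Icc (0 : ℝ) (dist x y),
      dist (f s) (f t) = |s - t|

/-- A geodesic metric space: any two points are joined by a geodesic. -/
def IsGeodesicSpace (Y : Type*) [MetricSpace Y] : Prop :=
  ∀ x y : Y, ∃ f : ℝ → Y, IsGeodesicFrom f x y

/-- δ-hyperbolicity: geodesic triangles are δ-thin. -/
def DeltaHyperbolic (δ : ℝ) (Y : Type*) [MetricSpace Y] : Prop :=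
  ∀ x y z : Y, ∀ f g h : ℝ → Y,
    IsGeodesicFrom f x y → IsGeodesicFrom g y z → IsGeodesicFrom h x z →
    ∀ s ∈ Set.Icc (0 : ℝ) (dist x y),
      ∃ p ∈ g '' Set.Icc (0 : ℝ) (dist y z) ∪ h '' Set.Icc (0 : ℝ) (dist x z),
        dist (f s) p ≤ δ

/-- A `k`-quasiconvex subset: geodesics between points of `A` stay `k`-close to `A`. -/
def QuasiconvexSet {Y : Type*} [MetricSpace Y] (k : ℝ) (A : Set Y) : Prop :=
  ∀ x ∈ A, ∀ y ∈ A, ∀ f : ℝ → Y, IsGeodesicFrom f x y →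
    ∀ s ∈ Set.Icc (0 : ℝ) (dist x y), ∃ a ∈ A, dist (f s) a ≤ k

/-- An `(L, C)`-quasigeodesic defined on a subset `D ⊆ ℝ`. -/
def IsQGOn {Y : Type*} [MetricSpace Y] (L C : ℝ) (D : Set ℝ) (q : ℝ → Y) : Prop :=
  ∀ s ∈ D, ∀ t ∈ D,
    |s - t| / L - C ≤ dist (q s) (q t) ∧ dist (q s) (q t) ≤ L * |s - t| + C

/-- A hierarchically hyperbolic space structure on the metric space `X`, with index set `S`
of domains, and associated uniformly hyperbolic spaces `C W` for `W : S`. -/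
structure HHS (X : Type*) [MetricSpace X] (S : Type*) (C : S → Type*)
    [∀ W, MetricSpace (C W)] where
  /-- `X` is a quasigeodesic space -/
  qg : ℝ
  qg_one : 1 ≤ qg
  quasigeodesic : ∀ x y : X, ∃ q : ℝ → X,
    IsQGOn qg qg (Set.Icc 0 (dist x y)) q ∧ q 0 = x ∧ q (dist x y) = y
  /-- the uniform hyperbolicity constant -/
  δ : ℝ
  δ_nonneg : 0 ≤ δ
  geodesicC : ∀ W, IsGeodesicSpace (C W)
  hyperbolicC : ∀ W, DeltaHyperbolic δ (C W)
  ξ : ℝ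
  ξ_nonneg : 0 ≤ ξ
  /-- the projections `π_W : X → subsets of C W` -/
  π : (W : S) → X → Set (C W)
  π_nonempty : ∀ W x, (π W x).Nonempty
  π_bounded : ∀ W x, Bornology.IsBounded (π W x)
  π_diam : ∀ W x, Metric.diam (π W x) ≤ ξ
  π_coarseLipschitz : ∀ W x y, Metric.diam (π W x ∪ π W y) ≤ ξ * dist x y + ξ
  π_quasiconvex : ∀ W, QuasiconvexSet ξ (⋃ x : X, π W x)
  /-- nesting (non-strict) -/
  nest : S → S → Prop
  nest_refl : ∀ U, nest U U
  nest_antisymm : ∀ U V, nest U V → nest V U → U = V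
  nest_trans : ∀ U V W, nest U V → nest V W → nest U W
  /-- the unique `⊑`-maximal domain -/
  top : S
  nest_top : ∀ U, nest U top
  /-- orthogonality -/
  orth : S → S → Prop
  orth_symm : ∀ U V, orth U V → orth V U
  orth_irrefl : ∀ U, ¬ orth U U
  nest_orth : ∀ U V W, nest V W → orth W U → orth V U
  orth_not_nest : ∀ U V, orth U V → ¬ nest U V
  container : ∀ T U, nest U T → (∃ V, nest V T ∧ orth V U) →
    ∃ W, nest W T ∧ W ≠ T ∧ ∀ V, nest V T → orth V U → nest V W
  κ₀ : ℝ
  κ₀_nonneg : 0 ≤ κ₀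
  /-- the relative projections `ρ V W = ρ^V_W ⊆ C W` (relevant when `V ⋔ W` or `V ⊏ W`) -/
  ρ : (V W : S) → Set (C W)
  ρ_bounded : ∀ V W, Bornology.IsBounded (ρ V W)
  ρ_diam : ∀ V W, Metric.diam (ρ V W) ≤ ξ
  ρ_nonempty : ∀ V W,
    ((¬ orth V W ∧ ¬ nest V W ∧ ¬ nest W V) ∨ (nest V W ∧ V ≠ W)) → (ρ V W).Nonempty
  /-- the relative projection maps `ρmap W V = ρ^W_V : C W → subsets of C V` (for `V ⊏ W`) -/
  ρmap : (W V : S) → C W → Set (C V)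
  consistency_t : ∀ (x : X) (V W : S), ¬ orth V W → ¬ nest V W → ¬ nest W V →
    min (Metric.diam (π W x ∪ ρ V W)) (Metric.diam (π V x ∪ ρ W V)) ≤ κ₀
  consistency_n : ∀ (x : X) (V W : S), nest V W → V ≠ W →
    min (Metric.diam (π W x ∪ ρ V W))
      (Metric.diam (π V x ∪ ⋃ p ∈ π W x, ρmap W V p)) ≤ κ₀
  ρ_coherence : ∀ U V W : S, nest U V →
    ((nest V W ∧ V ≠ W) ∨ ((¬ orth V W ∧ ¬ nest V W ∧ ¬ nest W V) ∧ ¬ orth W U)) →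
    Metric.diam (ρ U W ∪ ρ V W) ≤ κ₀
  /-- finite complexity -/
  cplx : ℕ
  complexity : ∀ (k : ℕ) (f : Fin k → S),
    (∀ i j : Fin k, i < j → nest (f i) (f j) ∧ f i ≠ f j) → k ≤ cplx
  /-- large links -/
  lam : ℝ
  lam_one : 1 ≤ lam
  E₀ : ℝ
  E₀_ge : max ξ κ₀ ≤ E₀
  large_links : ∀ (W : S) (x x' : X), ∃ T : Finset S,
    (T.card : ℝ) ≤ lam * Metric.diam (π W x ∪ π W x') + lam ∧
    (∀ Ti ∈ T, nest Ti W ∧ Ti ≠ W) ∧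
    (∀ T' : S, nest T' W → T' ≠ W →
      E₀ ≤ Metric.diam (π T' x ∪ π T' x') → ∃ Ti ∈ T, nest T' Ti) ∧
    (∀ Ti ∈ T, Metric.diam (π W x ∪ ρ Ti W) ≤
      lam * Metric.diam (π W x ∪ π W x') + lam)
  /-- bounded geodesic image -/
  bgiAx : ∀ (W V : S), nest V W → V ≠ W → ∀ (a b : C W) (f : ℝ → C W),
    IsGeodesicFrom f a b →
    Metric.diam (⋃ s ∈ Set.Icc (0 : ℝ) (dist a b), ρmap W V (f s)) ≤ E₀ ∨
    ∃ s ∈ Set.Icc (0 : ℝ) (dist a b), ∃ p ∈ ρ V W, dist (f s) p ≤ E₀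
  /-- partial realization -/
  alpha : ℝ
  alpha_nonneg : 0 ≤ alpha
  partial_realization : ∀ J : Finset S,
    (∀ V ∈ J, ∀ W ∈ J, V ≠ W → orth V W) →
    ∀ p : (V : S) → C V, (∀ V ∈ J, ∃ z : X, p V ∈ π V z) →
    ∃ x : X,
      (∀ V ∈ J, Metric.diam (π V x ∪ {p V}) ≤ alpha) ∧
      (∀ V ∈ J, ∀ W : S, nest V W → V ≠ W → Metric.diam (π W x ∪ ρ V W) ≤ alpha) ∧
      (∀ V ∈ J, ∀ W : S, ¬ orth W V → ¬ nest W V → ¬ nest V W →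
        Metric.diam (π W x ∪ ρ V W) ≤ alpha)
  /-- uniqueness -/
  θu : ℝ → ℝ
  uniqueness : ∀ (κ : ℝ) (x y : X), θu κ ≤ dist x y →
    ∃ V, κ ≤ Metric.diam (π V x ∪ π V y)
  /-- the HHS is normalized -/
  C₀ : ℝ
  normalized : ∀ (W : S) (c : C W), ∃ x : X, ∃ p ∈ π W x, dist c p ≤ C₀
  /-- a fixed constant exceeding every structural constant -/
  E : ℝ
  E_big : δ < E ∧ ξ < E ∧ κ₀ < E ∧ E₀ < E ∧ lam < E ∧ alpha < E ∧ C₀ < E ∧ qg < E ∧ 0 < E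

namespace HHS

variable {X : Type*} [MetricSpace X] {S : Type*} {C : S → Type*} [∀ W, MetricSpace (C W)]

/-- Proper nesting `U ⊏ V`. -/
def pnest (H : HHS X S C) (U V : S) : Prop := H.nest U V ∧ U ≠ V

/-- Transversality `U ⋔ V`: neither orthogonal nor `⊑`-comparable. -/
def transv (H : HHS X S C) (U V : S) : Prop :=
  ¬ H.orth U V ∧ ¬ H.nest U V ∧ ¬ H.nest V U

/-- `d_U (x, y) = diam (π_U x ∪ π_U y)`. -/
noncomputable def dU (H : HHS X S C) (U : S) (x y : X) : ℝ :=
  Metric.diam (H.π U x ∪ H.π U y)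

/-- The set of `K`-relevant domains for the pair `x, y`. -/
def Rel (H : HHS X S C) (K : ℝ) (x y : X) : Set S := {U | K ≤ H.dU U x y}

end HHS

variable {X : Type*} [MetricSpace X] {S : Type*} {C : S → Type*} [∀ W, MetricSpace (C W)]

/-- "Depth at most `n`": every strict nesting chain properly below `W` has length ≤ `n`. -/
private def DFA_Dp {X : Type*} [MetricSpace X] {S : Type*} {C : S → Type*}
    [∀ W, MetricSpace (C W)] (H : HHS X S C) (n : ℕ) (W : S) : Prop :=
  ∀ (k : ℕ) (f : Fin k → S),
    (∀ i j : Fin k, i < j → H.nest (f i) (f j) ∧ f i ≠ f j) →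
    (∀ i, H.nest (f i) W ∧ f i ≠ W) → k ≤ n

private lemma DFA_chain_snoc {X : Type*} [MetricSpace X] {S : Type*} {C : S → Type*}
    [∀ W, MetricSpace (C W)] (H : HHS X S C) {k : ℕ} {f : Fin k → S} {W : S}
    (hchain : ∀ i j : Fin k, i < j → H.nest (f i) (f j) ∧ f i ≠ f j)
    (hb : ∀ i, H.nest (f i) W ∧ f i ≠ W) :
    ∀ i j : Fin (k+1), i < j →
      H.nest ((Fin.snoc f W : Fin (k+1) → S) i) ((Fin.snoc f W : Fin (k+1) → S) j) ∧
        (Fin.snoc f W : Fin (k+1) → S) i ≠ (Fin.snoc f W : Fin (k+1) → S) j := by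
  intro i j hij
  rcases Fin.eq_castSucc_or_eq_last j with ⟨j', rfl⟩ | rfl
  · have hi : i ≠ Fin.last k := by
      intro h; subst h
      exact absurd (hij.trans (Fin.castSucc_lt_last j')) (lt_irrefl _)
    obtain ⟨i', rfl⟩ := Fin.exists_castSucc_eq.2 hi
    rw [Fin.snoc_castSucc, Fin.snoc_castSucc]
    exact hchain i' j' (Fin.castSucc_lt_castSucc_iff.1 hij)
  · have hi : i ≠ Fin.last k := fun h => absurd hij (h ▸ lt_irrefl _)
    obtain ⟨i', rfl⟩ := Fin.exists_castSucc_eq.2 hi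
    rw [Fin.snoc_castSucc, Fin.snoc_last]
    exact hb i'

private lemma DFA_dp_all {X : Type*} [MetricSpace X] {S : Type*} {C : S → Type*}
    [∀ W, MetricSpace (C W)] (H : HHS X S C) (W : S) : DFA_Dp H H.cplx W := by
  intro k f hchain hb
  have h := H.complexity (k+1) (Fin.snoc f W) (DFA_chain_snoc H hchain hb)
  omega

private lemma DFA_dp_step {X : Type*} [MetricSpace X] {S : Type*} {C : S → Type*}
    [∀ W, MetricSpace (C W)] (H : HHS X S C) {n : ℕ} {W Ti : S}
    (h : DFA_Dp H (n+1) W) (hn : H.nest Ti W) (hne : Ti ≠ W) : DFA_Dp H n Ti := by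
  intro k f hchain hb
  have hb' : ∀ i : Fin (k+1), H.nest ((Fin.snoc f Ti : Fin (k+1) → S) i) W ∧
      (Fin.snoc f Ti : Fin (k+1) → S) i ≠ W := by
    intro i
    rcases Fin.eq_castSucc_or_eq_last i with ⟨i', rfl⟩ | rfl
    · rw [Fin.snoc_castSucc]
      refine ⟨H.nest_trans _ _ _ (hb i').1 hn, ?_⟩
      intro hEq
      exact hne (H.nest_antisymm Ti W hn (hEq ▸ (hb i').1))
    · rw [Fin.snoc_last]; exact ⟨hn, hne⟩
  have := h (k+1) (Fin.snoc f Ti) (DFA_chain_snoc H hchain hb) hb'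
  omega

private lemma DFA_exists_min {X : Type*} [MetricSpace X] {S : Type*} {C : S → Type*}
    [∀ W, MetricSpace (C W)] (H : HHS X S C) :
    ∀ (n : ℕ) (A : Finset S), A.card ≤ n → A.Nonempty →
      ∃ a ∈ A, ∀ b ∈ A, H.nest b a → b = a := by
  classical
  intro n
  induction n with
  | zero =>
    intro A hc hne
    rcases hne with ⟨a, ha⟩
    have := Finset.card_pos.2 ⟨a, ha⟩
    omega
  | succ n ih =>
    rintro A hc ⟨a, ha⟩
    by_cases hne' : (A.filter (fun u => H.nest u a ∧ u ≠ a)).Nonempty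
    · have haA' : a ∉ A.filter (fun u => H.nest u a ∧ u ≠ a) := by
        simp [Finset.mem_filter]
      have hcard' : (A.filter (fun u => H.nest u a ∧ u ≠ a)).card ≤ n := by
        have hss : A.filter (fun u => H.nest u a ∧ u ≠ a) ⊂ A :=
          (Finset.filter_subset _ _).ssubset_of_ne (by
            intro hEq; rw [hEq] at haA'; exact haA' ha)
        have := Finset.card_lt_card hss
        omega
      obtain ⟨b, hbA', hmin⟩ := ih _ hcard' hne'
      have hb := (Finset.mem_filter.1 hbA').2
      refine ⟨b, Finset.filter_subset _ _ hbA', ?_⟩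
      intro c hcA hcb
      have h1 : H.nest c a := H.nest_trans c b a hcb hb.1
      have h2 : c ≠ a := by
        intro hca
        rw [hca] at hcb
        exact hb.2 (H.nest_antisymm b a hb.1 hcb)
      exact hmin c (Finset.mem_filter.2 ⟨hcA, h1, h2⟩) hcb
    · refine ⟨a, ha, ?_⟩
      intro b hb hba
      by_contra hne''
      exact hne' ⟨b, Finset.mem_filter.2 ⟨hb, hba, hne''⟩⟩

/-- **Changing thresholds in the distance formula sum** (Corollary `DF accounting`). -/
theorem df_accounting (H : HHS X S C) (K₂ : ℝ) :
    ∃ A B : ℝ, 1 ≤ A ∧ 0 ≤ B ∧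
      ∀ K₁ : ℝ, 50 * H.E < K₁ → K₁ + 100 * H.E ≤ K₂ →
      ∀ x y : X,
        -- both sums have finite support (hence are finite)
        {U : S | K₁ ≤ H.dU U x y}.Finite ∧
        {U : S | K₂ ≤ H.dU U x y}.Finite ∧
        (∑' U : S, if K₂ ≤ H.dU U x y then H.dU U x y else 0) ≤
          (∑' U : S, if K₁ ≤ H.dU U x y then H.dU U x y else 0) ∧
        (∑' U : S, if K₁ ≤ H.dU U x y then H.dU U x y else 0) ≤
          A * (∑' U : S, if K₂ ≤ H.dU U x y then H.dU U x y else 0) + B := by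
  classical
  refine ⟨max 1 (1 + K₂ * (1 + H.lam * (H.lam * K₂ + H.lam + 1) ^ H.cplx)
      + K₂ * (H.lam * (H.lam * K₂ + H.lam + 1) ^ H.cplx)),
    max 0 (K₂ * (1 + H.lam * (H.lam * K₂ + H.lam + 1) ^ H.cplx)
      + K₂ ^ 2 * (H.lam * (H.lam * K₂ + H.lam + 1) ^ H.cplx)),
    le_max_left _ _, le_max_left _ _, ?_⟩
  intro K₁ hK₁ hK₁₂ x y
  obtain ⟨-, -, -, hE₀E, -, -, -, hqgE, hEpos⟩ := H.E_big
  have hE1 : 1 < H.E := lt_of_le_of_lt H.qg_one hqgE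
  have hK₁pos : 0 < K₁ := by linarith
  have hE0K₁ : H.E₀ ≤ K₁ := by linarith
  have hK₁K₂ : K₁ ≤ K₂ := by linarith
  have hK₂1 : 1 ≤ K₂ := by linarith
  have hK₂pos : 0 < K₂ := by linarith
  have hlam1 : 1 ≤ H.lam := H.lam_one
  have hlam0 : 0 ≤ H.lam := by linarith
  have hbase1 : 1 ≤ H.lam * K₂ + H.lam + 1 := by nlinarith
  have hbase0 : 0 ≤ H.lam * K₂ + H.lam + 1 := by linarith
  have hd0 : ∀ V : S, 0 ≤ H.dU V x y := fun V => Metric.diam_nonneg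
  -- Step 1: finiteness of relevant sets, by induction on depth using large links
  have fin1 : ∀ (n : ℕ) (W : S), DFA_Dp H n W →
      ∃ s : Finset S, ∀ V, H.nest V W → K₁ ≤ H.dU V x y → V ∈ s := by
    intro n
    induction n with
    | zero =>
      intro W hW
      obtain ⟨T, -, hTsub, hTcover, -⟩ := H.large_links W x y
      refine ⟨{W}, ?_⟩
      intro V hVW hVd
      by_cases hVW' : V = W
      · simp [hVW']
      · exfalso
        obtain ⟨Ti, hTi, -⟩ := hTcover V hVW hVW' (le_trans hE0K₁ hVd)
        have h1 := hW 1 (fun _ => Ti) (fun i j hij => absurd hij (by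
          have h1 := i.isLt; have h2 := j.isLt; rw [Fin.lt_def]; omega))
          (fun _ => hTsub Ti hTi)
        omega
    | succ n ih =>
      intro W hW
      obtain ⟨T, -, hTsub, hTcover, -⟩ := H.large_links W x y
      choose g hg using fun (Ti : S) (h : Ti ∈ T) =>
        ih Ti (DFA_dp_step H hW (hTsub Ti h).1 (hTsub Ti h).2)
      refine ⟨insert W (T.attach.biUnion fun Ti => g Ti.1 Ti.2), ?_⟩
      intro V hVW hVd
      by_cases hVW' : V = W
      · simp [hVW']
      · obtain ⟨Ti, hTi, hVTi⟩ := hTcover V hVW hVW' (le_trans hE0K₁ hVd)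
        exact Finset.mem_insert_of_mem (Finset.mem_biUnion.2
          ⟨⟨Ti, hTi⟩, Finset.mem_attach _ _, hg Ti hTi V hVTi hVd⟩)
  have hR1fin : {U : S | K₁ ≤ H.dU U x y}.Finite := by
    obtain ⟨s, hs⟩ := fin1 H.cplx H.top (DFA_dp_all H H.top)
    exact Set.Finite.subset s.finite_toSet (fun V hV => hs V (H.nest_top V) hV)
  have hR2fin : {U : S | K₂ ≤ H.dU U x y}.Finite :=
    hR1fin.subset (fun U hU => le_trans hK₁K₂ hU)
  have hmem1 : ∀ U, U ∈ hR1fin.toFinset ↔ K₁ ≤ H.dU U x y :=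
    fun U => Set.Finite.mem_toFinset _
  have hmem2 : ∀ U, U ∈ hR2fin.toFinset ↔ K₂ ≤ H.dU U x y :=
    fun U => Set.Finite.mem_toFinset _
  set s₁ := hR1fin.toFinset with hs₁def
  set s₂ := hR2fin.toFinset with hs₂def
  have hsub : s₂ ⊆ s₁ := fun U hU => (hmem1 U).2 (le_trans hK₁K₂ ((hmem2 U).1 hU))
  -- Step 2: counting lemma away from K₂-relevant domains
  have B1 : ∀ (n : ℕ) (W W₀ : S), DFA_Dp H n W → H.nest W W₀ → W ≠ W₀ →
      ∃ s : Finset S,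
        (∀ V, H.nest V W → K₁ ≤ H.dU V x y →
          (∀ U, K₂ ≤ H.dU U x y → H.nest V U → H.nest U W₀ → U = W₀) → V ∈ s) ∧
        (s.card : ℝ) ≤ (H.lam * K₂ + H.lam + 1) ^ n := by
    intro n
    induction n with
    | zero =>
      intro W W₀ hW hWW₀ hne
      by_cases hdW : K₂ ≤ H.dU W x y
      · refine ⟨∅, ?_, by simp⟩
        intro V hVW hVd hmin
        exact absurd (hmin W hdW hVW hWW₀) hne
      · obtain ⟨T, -, hTsub, hTcover, -⟩ := H.large_links W x y
        refine ⟨{W}, ?_, by simp⟩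
        intro V hVW hVd hmin
        by_cases hVW' : V = W
        · simp [hVW']
        · exfalso
          obtain ⟨Ti, hTi, -⟩ := hTcover V hVW hVW' (le_trans hE0K₁ hVd)
          have h1 := hW 1 (fun _ => Ti) (fun i j hij => absurd hij (by
            have h1 := i.isLt; have h2 := j.isLt; rw [Fin.lt_def]; omega))
            (fun _ => hTsub Ti hTi)
          omega
    | succ n ih =>
      intro W W₀ hW hWW₀ hne
      by_cases hdW : K₂ ≤ H.dU W x y
      · refine ⟨∅, ?_, ?_⟩
        · intro V hVW hVd hmin
          exact absurd (hmin W hdW hVW hWW₀) hne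
        · simp only [Finset.card_empty, Nat.cast_zero]
          positivity
      · obtain ⟨T, hTcard, hTsub, hTcover, -⟩ := H.large_links W x y
        have hTine : ∀ Ti ∈ T, Ti ≠ W₀ := by
          intro Ti hTi hEq
          exact hne (H.nest_antisymm W W₀ hWW₀ (hEq ▸ (hTsub Ti hTi).1))
        choose g hg using fun (Ti : S) (h : Ti ∈ T) =>
          ih Ti W₀ (DFA_dp_step H hW (hTsub Ti h).1 (hTsub Ti h).2)
            (H.nest_trans Ti W W₀ (hTsub Ti h).1 hWW₀) (hTine Ti h)
        refine ⟨insert W (T.attach.biUnion fun Ti => g Ti.1 Ti.2), ?_, ?_⟩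
        · intro V hVW hVd hmin
          by_cases hVW' : V = W
          · simp [hVW']
          · obtain ⟨Ti, hTi, hVTi⟩ := hTcover V hVW hVW' (le_trans hE0K₁ hVd)
            exact Finset.mem_insert_of_mem (Finset.mem_biUnion.2
              ⟨⟨Ti, hTi⟩, Finset.mem_attach _ _, (hg Ti hTi).1 V hVTi hVd hmin⟩)
        · have hb1 : ((insert W (T.attach.biUnion fun Ti => g Ti.1 Ti.2)).card : ℝ)
              ≤ ((T.attach.biUnion fun Ti => g Ti.1 Ti.2).card : ℝ) + 1 := by
            exact_mod_cast Finset.card_insert_le W _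
          have hb2 : ((T.attach.biUnion fun Ti => g Ti.1 Ti.2).card : ℝ)
              ≤ ∑ a ∈ T.attach, ((g a.1 a.2).card : ℝ) := by
            rw [← Nat.cast_sum]
            exact_mod_cast Finset.card_biUnion_le
          have hb3 : ∑ a ∈ T.attach, ((g a.1 a.2).card : ℝ)
              ≤ (T.card : ℝ) * (H.lam * K₂ + H.lam + 1) ^ n := by
            have := Finset.sum_le_card_nsmul T.attach (fun a => ((g a.1 a.2).card : ℝ))
              ((H.lam * K₂ + H.lam + 1) ^ n) (fun a _ => (hg a.1 a.2).2)
            rwa [Finset.card_attach, nsmul_eq_mul] at this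
          have hdW' : H.dU W x y ≤ K₂ := le_of_not_ge hdW
          have hTb : (T.card : ℝ) ≤ H.lam * K₂ + H.lam := by
            have h3 : H.lam * H.dU W x y ≤ H.lam * K₂ :=
              mul_le_mul_of_nonneg_left hdW' hlam0
            calc (T.card : ℝ) ≤ H.lam * H.dU W x y + H.lam := hTcard
              _ ≤ H.lam * K₂ + H.lam := by linarith
          have hpow0 : (0:ℝ) ≤ (H.lam * K₂ + H.lam + 1) ^ n := pow_nonneg hbase0 n
          have hpow1 : (1:ℝ) ≤ (H.lam * K₂ + H.lam + 1) ^ n := one_le_pow₀ hbase1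
          rw [pow_succ]
          nlinarith [mul_le_mul_of_nonneg_right hTb hpow0]
  -- Step 3: count below a root domain
  have B2 : ∀ W₀ : S, ∃ s : Finset S,
      (∀ V, H.nest V W₀ → K₁ ≤ H.dU V x y →
        (∀ U, K₂ ≤ H.dU U x y → H.nest V U → H.nest U W₀ → U = W₀) → V ∈ s) ∧
      (s.card : ℝ) ≤ 1 + (H.lam * H.dU W₀ x y + H.lam)
        * (H.lam * K₂ + H.lam + 1) ^ H.cplx := by
    intro W₀
    obtain ⟨T, hTcard, hTsub, hTcover, -⟩ := H.large_links W₀ x y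
    choose g hg using fun (Ti : S) (h : Ti ∈ T) =>
      B1 H.cplx Ti W₀ (DFA_dp_all H Ti) (hTsub Ti h).1 (hTsub Ti h).2
    refine ⟨insert W₀ (T.attach.biUnion fun Ti => g Ti.1 Ti.2), ?_, ?_⟩
    · intro V hVW hVd hmin
      by_cases hVW' : V = W₀
      · simp [hVW']
      · obtain ⟨Ti, hTi, hVTi⟩ := hTcover V hVW hVW' (le_trans hE0K₁ hVd)
        exact Finset.mem_insert_of_mem (Finset.mem_biUnion.2
          ⟨⟨Ti, hTi⟩, Finset.mem_attach _ _, (hg Ti hTi).1 V hVTi hVd hmin⟩)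
    · have hb1 : ((insert W₀ (T.attach.biUnion fun Ti => g Ti.1 Ti.2)).card : ℝ)
          ≤ ((T.attach.biUnion fun Ti => g Ti.1 Ti.2).card : ℝ) + 1 := by
        exact_mod_cast Finset.card_insert_le W₀ _
      have hb2 : ((T.attach.biUnion fun Ti => g Ti.1 Ti.2).card : ℝ)
          ≤ ∑ a ∈ T.attach, ((g a.1 a.2).card : ℝ) := by
        rw [← Nat.cast_sum]
        exact_mod_cast Finset.card_biUnion_le
      have hb3 : ∑ a ∈ T.attach, ((g a.1 a.2).card : ℝ)
          ≤ (T.card : ℝ) * (H.lam * K₂ + H.lam + 1) ^ H.cplx := by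
        have := Finset.sum_le_card_nsmul T.attach (fun a => ((g a.1 a.2).card : ℝ))
          ((H.lam * K₂ + H.lam + 1) ^ H.cplx) (fun a _ => (hg a.1 a.2).2)
        rwa [Finset.card_attach, nsmul_eq_mul] at this
      have hTb : (T.card : ℝ) ≤ H.lam * H.dU W₀ x y + H.lam := hTcard
      have hpow0 : (0:ℝ) ≤ (H.lam * K₂ + H.lam + 1) ^ H.cplx := pow_nonneg hbase0 _
      nlinarith [mul_le_mul_of_nonneg_right hTb hpow0]
  choose G hG using B2
  -- Step 4: covering of the K₁-relevant set
  have hcover : s₁ ⊆ (insert H.top s₂).biUnion G := by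
    intro V hV
    have hVd : K₁ ≤ H.dU V x y := (hmem1 V).1 hV
    by_cases hAne : (s₂.filter (fun U => H.nest V U)).Nonempty
    · obtain ⟨U₀, hU₀A, hmin⟩ := DFA_exists_min H _ _ le_rfl hAne
      have hU₀ := Finset.mem_filter.1 hU₀A
      refine Finset.mem_biUnion.2 ⟨U₀, Finset.mem_insert_of_mem hU₀.1, ?_⟩
      refine (hG U₀).1 V hU₀.2 hVd ?_
      intro U hUd hVU hUU₀
      exact hmin U (Finset.mem_filter.2 ⟨(hmem2 U).2 hUd, hVU⟩) hUU₀
    · refine Finset.mem_biUnion.2 ⟨H.top, Finset.mem_insert_self _ _, ?_⟩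
      refine (hG H.top).1 V (H.nest_top V) hVd ?_
      intro U hUd hVU _
      exact absurd ⟨U, Finset.mem_filter.2 ⟨(hmem2 U).2 hUd, hVU⟩⟩ hAne
  -- Step 5: cardinality estimate
  have hS0 : 0 ≤ ∑ U ∈ s₂, H.dU U x y := Finset.sum_nonneg (fun U _ => hd0 U)
  have hcards₂ : (s₂.card : ℝ) ≤ ∑ U ∈ s₂, H.dU U x y := by
    have := Finset.card_nsmul_le_sum s₂ (fun U => H.dU U x y) 1
      (fun U hU => le_trans hK₂1 ((hmem2 U).1 hU))
    rwa [nsmul_eq_mul, mul_one] at this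
  have hcardt : ((insert H.top s₂).card : ℝ) ≤ (∑ U ∈ s₂, H.dU U x y) + 1 := by
    have h1 : ((insert H.top s₂).card : ℝ) ≤ (s₂.card : ℝ) + 1 := by
      exact_mod_cast Finset.card_insert_le H.top s₂
    linarith
  have hsumd : ∑ W₀ ∈ insert H.top s₂, H.dU W₀ x y ≤ (∑ U ∈ s₂, H.dU U x y) + K₂ := by
    by_cases htop : H.top ∈ s₂
    · rw [Finset.insert_eq_self.2 htop]
      linarith
    · rw [Finset.sum_insert htop]
      have hdtop : H.dU H.top x y ≤ K₂ :=
        le_of_not_ge (fun h => htop ((hmem2 _).2 h))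
      linarith
  have hcard1 : (s₁.card : ℝ) ≤ ∑ W₀ ∈ insert H.top s₂, ((G W₀).card : ℝ) := by
    have h1 : s₁.card ≤ ((insert H.top s₂).biUnion G).card := Finset.card_le_card hcover
    have h2 : ((insert H.top s₂).biUnion G).card ≤ ∑ W₀ ∈ insert H.top s₂, (G W₀).card :=
      Finset.card_biUnion_le
    calc (s₁.card : ℝ) ≤ ((∑ W₀ ∈ insert H.top s₂, (G W₀).card : ℕ) : ℝ) := by
          exact_mod_cast le_trans h1 h2
      _ = ∑ W₀ ∈ insert H.top s₂, ((G W₀).card : ℝ) := by push_cast; rfl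
  have hcard2 : (s₁.card : ℝ) ≤ ∑ W₀ ∈ insert H.top s₂,
      (1 + (H.lam * H.dU W₀ x y + H.lam) * (H.lam * K₂ + H.lam + 1) ^ H.cplx) :=
    hcard1.trans (Finset.sum_le_sum fun W₀ _ => (hG W₀).2)
  have hexp : ∑ W₀ ∈ insert H.top s₂,
      (1 + (H.lam * H.dU W₀ x y + H.lam) * (H.lam * K₂ + H.lam + 1) ^ H.cplx)
      = ((insert H.top s₂).card : ℝ)
          * (1 + H.lam * (H.lam * K₂ + H.lam + 1) ^ H.cplx)
        + (H.lam * (H.lam * K₂ + H.lam + 1) ^ H.cplx)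
          * ∑ W₀ ∈ insert H.top s₂, H.dU W₀ x y := by
    calc ∑ W₀ ∈ insert H.top s₂,
        (1 + (H.lam * H.dU W₀ x y + H.lam) * (H.lam * K₂ + H.lam + 1) ^ H.cplx)
        = ∑ W₀ ∈ insert H.top s₂,
          ((1 + H.lam * (H.lam * K₂ + H.lam + 1) ^ H.cplx)
            + (H.lam * (H.lam * K₂ + H.lam + 1) ^ H.cplx) * H.dU W₀ x y) :=
          Finset.sum_congr rfl (fun W₀ _ => by ring)
      _ = _ := by
          rw [Finset.sum_add_distrib, Finset.sum_const, nsmul_eq_mul, Finset.mul_sum]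
  have hpowQ0 : (0:ℝ) ≤ (H.lam * K₂ + H.lam + 1) ^ H.cplx := pow_nonneg hbase0 _
  have hL0 : (0:ℝ) ≤ H.lam * (H.lam * K₂ + H.lam + 1) ^ H.cplx :=
    mul_nonneg hlam0 hpowQ0
  have hcardfinal : (s₁.card : ℝ)
      ≤ ((∑ U ∈ s₂, H.dU U x y) + 1)
          * (1 + H.lam * (H.lam * K₂ + H.lam + 1) ^ H.cplx)
        + (H.lam * (H.lam * K₂ + H.lam + 1) ^ H.cplx)
          * ((∑ U ∈ s₂, H.dU U x y) + K₂) := by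
    rw [hexp] at hcard2
    have h1 : ((insert H.top s₂).card : ℝ)
          * (1 + H.lam * (H.lam * K₂ + H.lam + 1) ^ H.cplx)
        ≤ ((∑ U ∈ s₂, H.dU U x y) + 1)
          * (1 + H.lam * (H.lam * K₂ + H.lam + 1) ^ H.cplx) :=
      mul_le_mul_of_nonneg_right hcardt (by linarith)
    have h2 : (H.lam * (H.lam * K₂ + H.lam + 1) ^ H.cplx)
          * ∑ W₀ ∈ insert H.top s₂, H.dU W₀ x y
        ≤ (H.lam * (H.lam * K₂ + H.lam + 1) ^ H.cplx)
          * ((∑ U ∈ s₂, H.dU U x y) + K₂) :=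
      mul_le_mul_of_nonneg_left hsumd hL0
    linarith
  -- Step 6: rewrite the tsums as finite sums
  have hts1 : (∑' U : S, if K₁ ≤ H.dU U x y then H.dU U x y else 0)
      = ∑ U ∈ s₁, H.dU U x y := by
    rw [tsum_eq_sum (s := s₁) (fun U hU => if_neg (fun h => hU ((hmem1 U).2 h)))]
    exact Finset.sum_congr rfl (fun U hU => if_pos ((hmem1 U).1 hU))
  have hts2 : (∑' U : S, if K₂ ≤ H.dU U x y then H.dU U x y else 0)
      = ∑ U ∈ s₂, H.dU U x y := by
    rw [tsum_eq_sum (s := s₂) (fun U hU => if_neg (fun h => hU ((hmem2 U).2 h)))]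
    exact Finset.sum_congr rfl (fun U hU => if_pos ((hmem2 U).1 hU))
  refine ⟨hR1fin, hR2fin, ?_, ?_⟩
  · rw [hts1, hts2]
    exact Finset.sum_le_sum_of_subset_of_nonneg hsub (fun U _ _ => hd0 U)
  · rw [hts1, hts2]
    have hsplit : ∑ U ∈ s₁, H.dU U x y
        = (∑ U ∈ s₂, H.dU U x y) + ∑ U ∈ s₁ \ s₂, H.dU U x y := by
      rw [← Finset.sum_sdiff hsub]
      ring
    have hdiffb : ∑ U ∈ s₁ \ s₂, H.dU U x y ≤ (s₁.card : ℝ) * K₂ := by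
      calc ∑ U ∈ s₁ \ s₂, H.dU U x y ≤ (s₁ \ s₂).card • K₂ :=
          Finset.sum_le_card_nsmul _ _ _ (fun U hU =>
            le_of_not_ge (fun h => (Finset.mem_sdiff.1 hU).2 ((hmem2 U).2 h)))
        _ = ((s₁ \ s₂).card : ℝ) * K₂ := nsmul_eq_mul _ _
        _ ≤ (s₁.card : ℝ) * K₂ := by
            have h1 : (s₁ \ s₂).card ≤ s₁.card := Finset.card_le_card (Finset.sdiff_subset)
            exact mul_le_mul_of_nonneg_right (by exact_mod_cast h1) (le_of_lt hK₂pos)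
    have hstep : ∑ U ∈ s₁, H.dU U x y
        ≤ (1 + K₂ * (1 + H.lam * (H.lam * K₂ + H.lam + 1) ^ H.cplx)
            + K₂ * (H.lam * (H.lam * K₂ + H.lam + 1) ^ H.cplx)) * (∑ U ∈ s₂, H.dU U x y)
          + (K₂ * (1 + H.lam * (H.lam * K₂ + H.lam + 1) ^ H.cplx)
            + K₂ ^ 2 * (H.lam * (H.lam * K₂ + H.lam + 1) ^ H.cplx)) := by
      have hmul : (s₁.card : ℝ) * K₂
          ≤ (((∑ U ∈ s₂, H.dU U x y) + 1)
              * (1 + H.lam * (H.lam * K₂ + H.lam + 1) ^ H.cplx)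
            + (H.lam * (H.lam * K₂ + H.lam + 1) ^ H.cplx)
              * ((∑ U ∈ s₂, H.dU U x y) + K₂)) * K₂ :=
        mul_le_mul_of_nonneg_right hcardfinal (le_of_lt hK₂pos)
      nlinarith [hsplit, hdiffb, hmul]
    refine hstep.trans (add_le_add ?_ (le_max_right _ _))
    exact mul_le_mul_of_nonneg_right (le_max_right _ _) hS0
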